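/- Let K be a semiring, (Σ,M) and (Γ,M') OP alphabets, S:(Σ,M)^+→K a regular (respectively strictly regular) series, and h:Σ→Γ an OPM-preserving projection. Then the series h(S):(Γ,M')^+→K, defined by h(S)(v)=Σ_{w∈(Σ,M)^+, h(w)=v} S(w), is regular (respectively strictly regular). -/

import Mathlib

namespace WOP

/-- Precedence relations: yields precedence, equal in precedence, takes precedence. -/
inductive PrecRel where
  | lt | eq | gt
deriving DecidableEq

/-- An operator precedence matrix on `Σ ∪ {#}`, where `none` encodes `#`.
It assigns at most one precedence relation to each ordered pair, with
`# ⋖ a` and `a ⋗ #` for every letter `a`. -/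
structure OPM (A : Type) where
  rel : Option A → Option A → Option PrecRel
  hash_lt : ∀ a : A, rel none (some a) = some .lt
  hash_gt : ∀ a : A, rel (some a) none = some .gt

variable {A B K : Type}

/-- The letter of `#w#` at position `i` (positions `0` and `> |w|` carry `#`, i.e. `none`). -/
def letterAt (w : List A) (i : ℕ) : Option A :=
  if i = 0 then none else w[i - 1]?

section ChainRel

variable (M : OPM A) (L : ℕ → Option A)

mutual
  /-- `ChainMid M L k j`: there are `k = k_s < ... < k_m = j` with
  `L k_s ≐ L k_{s+1} ≐ ... ≐ L k_{m-1} ⋗ L k_m` and the gap condition between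
  consecutive elements. -/
  inductive ChainMid : ℕ → ℕ → Prop where
    | last {k j : ℕ} : M.rel (L k) (L j) = some .gt → ChainGap k j → ChainMid k j
    | step {k k' j : ℕ} : M.rel (L k) (L k') = some .eq → ChainGap k k' →
        ChainMid k' j → ChainMid k j

  /-- The gap condition between consecutive elements of a chain:
  adjacent positions or a chain. -/
  inductive ChainGap : ℕ → ℕ → Prop where
    | adj (k : ℕ) : ChainGap k (k + 1)
    | chain {k k' : ℕ} : Chain k k' → ChainGap k k'

  /-- The chain relation `i ⤳ j`: there are positions `i = k_1 < ... < k_m = j` with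
  `L k_1 ⋖ L k_2 ≐ ... ≐ L k_{m-1} ⋗ L k_m` such that consecutive `k`'s are adjacent
  or themselves related by `⤳`. -/
  inductive Chain : ℕ → ℕ → Prop where
    | mk {i k j : ℕ} : M.rel (L i) (L k) = some .lt → ChainGap i k → ChainMid k j →
        Chain i j
end

end ChainRel

/-- `(Σ,M)^+`: the set of nonempty words compatible with `M`, i.e. `0 ⤳ |w|+1` in `#w#`. -/
def OPWords (M : OPM A) : Set (List A) :=
  {w | w ≠ [] ∧ Chain M (letterAt w) 0 (w.length + 1)}

/-- An (unweighted) operator precedence automaton over the alphabet `A`. -/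
structure OPA (A : Type) where
  Q : Type
  fin : Fintype Q
  I : Set Q
  F : Set Q
  δpush : Set (Q × A × Q)
  δshift : Set (Q × A × Q)
  δpop : Set (Q × Q × Q)

/-- A weighted operator precedence automaton over the alphabet `A` and weights in `K`. -/
structure WOPA (A K : Type) extends OPA A where
  wtpush : Q × A × Q → K
  wtshift : Q × A × Q → K
  wtpop : Q × Q × Q → K

/-- A configuration: a stack of (symbol, state) pairs, a current state,
and the remaining input. -/
structure Config (A Q : Type) where
  stack : List (A × Q)
  state : Q
  input : List A

/-- The moves (transitions) an OPA may take. -/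
inductive Move (A Q : Type) where
  | push (q : Q) (b : A) (r : Q)
  | shift (q : Q) (b : A) (r : Q)
  | pop (q p r : Q)

/-- The topmost stack symbol (`none` = `#` for the empty stack). -/
def topSym {Q : Type} (st : List (A × Q)) : Option A := st.head?.map Prod.fst

/-- One step of an OPA on an OP alphabet `(A, M)`. -/
inductive Exec (M : OPM A) (T : OPA A) : Config A T.Q → Move A T.Q → Config A T.Q → Prop where
  | push {st : List (A × T.Q)} {q r : T.Q} {b : A} {x : List A} :
      M.rel (topSym st) (some b) = some .lt → (q, b, r) ∈ T.δpush →
      Exec M T ⟨st, q, b :: x⟩ (.push q b r) ⟨(b, q) :: st, r, x⟩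
  | shift {st : List (A × T.Q)} {p q r : T.Q} {a b : A} {x : List A} :
      M.rel (some a) (some b) = some .eq → (q, b, r) ∈ T.δshift →
      Exec M T ⟨(a, p) :: st, q, b :: x⟩ (.shift q b r) ⟨(b, p) :: st, r, x⟩
  | pop {st : List (A × T.Q)} {p q r : T.Q} {a : A} {x : List A} :
      M.rel (some a) x.head? = some .gt → (q, p, r) ∈ T.δpop →
      Exec M T ⟨(a, p) :: st, q, x⟩ (.pop q p r) ⟨st, r, x⟩

/-- Execution of a sequence of moves. -/
inductive ExecList (M : OPM A) (T : OPA A) :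
    Config A T.Q → List (Move A T.Q) → Config A T.Q → Prop where
  | nil (c : Config A T.Q) : ExecList M T c [] c
  | cons {c c' c'' : Config A T.Q} {m : Move A T.Q} {ms : List (Move A T.Q)} :
      Exec M T c m c' → ExecList M T c' ms c'' → ExecList M T c (m :: ms) c''

/-- The weight of a move of a weighted OPA. -/
def moveWt [Semiring K] (W : WOPA A K) : Move A W.Q → K
  | .push q b r => W.wtpush (q, b, r)
  | .shift q b r => W.wtshift (q, b, r)
  | .pop q p r => W.wtpop (q, p, r)

/-- The accepting runs of an OPA on `w`: an initial state, a sequence of moves from the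
initial configuration (empty stack, whole input) to a final configuration
(empty stack, input read), and the final state reached. -/
def AccRuns (M : OPM A) (T : OPA A) (w : List A) : Set (T.Q × List (Move A T.Q) × T.Q) :=
  {ρ | ρ.1 ∈ T.I ∧ ρ.2.2 ∈ T.F ∧ ExecList M T ⟨[], ρ.1, w⟩ ρ.2.1 ⟨[], ρ.2.2, []⟩}

/-- The behavior `⟦W⟧(w)`: the sum over all accepting runs of `W` on `w` of the product
(in order) of the weights of the moves of the run. -/
noncomputable def behavior [Semiring K] (M : OPM A) (W : WOPA A K) (w : List A) : K :=
  ∑ᶠ ρ ∈ AccRuns M W.toOPA w, (ρ.2.1.map (moveWt W)).prod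

/-- A weighted OPA is restricted (an rwOPA) if all pop weights are `1`. -/
def Restricted [Semiring K] (W : WOPA A K) : Prop := ∀ t ∈ W.δpop, W.wtpop t = 1

/-- A series `S : (Σ,M)^+ → K` is regular if it is the behavior of some wOPA. -/
def Regular [Semiring K] (M : OPM A) (S : List A → K) : Prop :=
  ∃ W : WOPA A K, ∀ w ∈ OPWords M, S w = behavior M W w

/-- A series is strictly regular if it is the behavior of some restricted wOPA. -/
def StrictlyRegular [Semiring K] (M : OPM A) (S : List A → K) : Prop :=
  ∃ W : WOPA A K, Restricted W ∧ ∀ w ∈ OPWords M, S w = behavior M W w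

/-- Unweighted acceptance. -/
def Accepts (M : OPM A) (T : OPA A) (w : List A) : Prop :=
  ∃ qI ms qF, qI ∈ T.I ∧ qF ∈ T.F ∧ ExecList M T ⟨[], qI, w⟩ ms ⟨[], qF, []⟩

/-- A language `L ⊆ (Σ,M)^+` is an operator precedence language if it is the set of
compatible words accepted by some OPA. -/
def IsOPL (M : OPM A) (L : Set (List A)) : Prop :=
  ∃ T : OPA A, L = {w | w ∈ OPWords M ∧ Accepts M T w}

/-- The intersection `S ∩ L` of a series with a language. -/
noncomputable def interSeries [Semiring K] (S : List A → K) (L : Set (List A))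
    (w : List A) : K :=
  open Classical in if w ∈ L then S w else 0

/-- `h : Σ → Γ` is OPM-preserving: `a ⊙ b` iff `h(a) ⊙ h(b)` for every relation `⊙`. -/
def OPMPreserving (M : OPM A) (M' : OPM B) (h : A → B) : Prop :=
  ∀ a b : A, M.rel (some a) (some b) = M'.rel (some (h a)) (some (h b))

/-- The image series `h(S)(v) = ∑_{w ∈ (Σ,M)^+, h(w) = v} S(w)`. -/
noncomputable def mapSeries [Semiring K] (M : OPM A) (h : A → B) (S : List A → K)
    (v : List B) : K :=
  ∑ᶠ w ∈ {w | w ∈ OPWords M ∧ w.map h = v}, S w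

/-- The pullback OPM `h⁻¹(M)` along `h : Σ' → Σ`. -/
def pullOPM (M : OPM A) (h : B → A) : OPM B where
  rel o₁ o₂ := M.rel (o₁.map h) (o₂.map h)
  hash_lt b := M.hash_lt (h b)
  hash_gt b := M.hash_gt (h b)

/-- The Nivat class `N(Σ,M,K)`: series obtained from a one-state restricted wOPA over a
pulled-back OP alphabet, intersected with an OPL, followed by the projection. -/
def NivatClass [Semiring K] (M : OPM A) (S : List A → K) : Prop :=
  ∃ (B : Type) (_ : Fintype B) (h : B → A) (W : WOPA B K) (L : Set (List B)),
    Restricted W ∧ (∃ q₀ : W.Q, ∀ q : W.Q, q = q₀) ∧ IsOPL (pullOPM M h) L ∧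
    ∀ v ∈ OPWords M,
      S v = mapSeries (pullOPM M h) h (interSeries (behavior (pullOPM M h) W) L) v

/-- An OPL step function: a finite sum `∑ kᵢ · 1_{Lᵢ}` with the `Lᵢ` OPLs forming a
partition of `(Σ,M)^+`. -/
def IsOPLStep [Semiring K] (M : OPM A) (S : List A → K) : Prop :=
  ∃ (n : ℕ) (k : Fin n → K) (L : Fin n → Set (List A)),
    (∀ i, IsOPL M (L i)) ∧ (∀ i j, i ≠ j → Disjoint (L i) (L j)) ∧
    (⋃ i, L i) = OPWords M ∧ ∀ i, ∀ w ∈ L i, S w = k i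



section ChainTransfer

variable {A B : Type}

/-- If `ChainMid` starts at a `#` position, then `# ⋗ #` and it ends at a `#` position. -/
lemma chainMid_none {M : OPM A} {L : ℕ → Option A} :
    ∀ {k j : ℕ}, ChainMid M L k j → L k = none →
      M.rel none none = some .gt ∧ L j = none := by
  intro k j hm
  refine ChainMid.rec (M := M) (L := L)
    (motive_1 := fun k j _ => L k = none → M.rel none none = some .gt ∧ L j = none)
    (motive_2 := fun _ _ _ => True) (motive_3 := fun _ _ _ => True)
    ?_ ?_ ?_ ?_ ?_ hm
  · intro k j hrel _ _ hk
    rw [hk] at hrel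
    cases hj : L j with
    | none => rw [hj] at hrel; exact ⟨hrel, rfl⟩
    | some b => rw [hj, M.hash_lt b] at hrel; simp at hrel
  · intro k k' j hrel _ _ _ ih hk
    rw [hk] at hrel
    cases hk' : L k' with
    | none =>
      rw [hk'] at hrel
      have := (ih hk').1
      rw [hrel] at this; simp at this
    | some b => rw [hk', M.hash_lt b] at hrel; simp at hrel
  · intro _; trivial
  · intro _ _ _ _; trivial
  · intro _ _ _ _ _ _ _ _; trivial

/-- Transfer of the chain relation along letter families with matching relations. -/
lemma chain_transfer {M₁ : OPM A} {M₂ : OPM B} {L₁ : ℕ → Option A} {L₂ : ℕ → Option B}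
    (hnone : ∀ i, L₁ i = none ↔ L₂ i = none)
    (hrel : ∀ i j, L₁ i ≠ none ∨ L₁ j ≠ none →
      M₁.rel (L₁ i) (L₁ j) = M₂.rel (L₂ i) (L₂ j)) :
    ∀ {i j : ℕ}, Chain M₁ L₁ i j → Chain M₂ L₂ i j := by
  intro i j hc
  refine Chain.rec (M := M₁) (L := L₁)
    (motive_1 := fun k j _ => L₁ k ≠ none → ChainMid M₂ L₂ k j)
    (motive_2 := fun k j _ => ChainGap M₂ L₂ k j)
    (motive_3 := fun i j _ => Chain M₂ L₂ i j)
    ?_ ?_ ?_ ?_ ?_ hc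
  · -- mid.last
    intro k j hr hg ihg hk
    exact ChainMid.last ((hrel k j (Or.inl hk)) ▸ hr) ihg
  · -- mid.step
    intro k k' j hr hg hm ihg ihm hk
    have hk' : L₁ k' ≠ none := by
      intro hn
      obtain ⟨a, ha⟩ := Option.ne_none_iff_exists'.mp hk
      rw [ha, hn, M₁.hash_gt a] at hr
      simp at hr
    exact ChainMid.step ((hrel k k' (Or.inl hk)) ▸ hr) ihg (ihm hk')
  · -- gap.adj
    intro k; exact ChainGap.adj k
  · -- gap.chain
    intro k k' _ ihc; exact ChainGap.chain ihc
  · -- chain.mk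
    intro i k j hr hg hm ihg ihm
    have hk : L₁ k ≠ none := by
      intro hn
      have hi : L₁ i = none := by
        cases hi : L₁ i with
        | none => rfl
        | some a => rw [hi, hn, M₁.hash_gt a] at hr; simp at hr
      have h2 := (chainMid_none hm hn).1
      rw [hi, hn] at hr
      rw [hr] at h2; simp at h2
    exact Chain.mk ((hrel i k (Or.inr hk)) ▸ hr) ihg (ihm hk)

lemma letterAt_map (h : A → B) (w : List A) (i : ℕ) :
    letterAt (w.map h) i = (letterAt w i).map h := by
  unfold letterAt
  split
  · rfl
  · simp

/-- Compatibility transfers along an OPM-preserving projection. -/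
lemma opwords_map_iff {M : OPM A} {M' : OPM B} {h : A → B}
    (hp : OPMPreserving M M' h) (w : List A) :
    w ∈ OPWords M ↔ w.map h ∈ OPWords M' := by
  have hnone : ∀ i, letterAt w i = none ↔ letterAt (w.map h) i = none := by
    intro i; rw [letterAt_map]; simp
  have hrel : ∀ i j, letterAt w i ≠ none ∨ letterAt w j ≠ none →
      M.rel (letterAt w i) (letterAt w j)
        = M'.rel (letterAt (w.map h) i) (letterAt (w.map h) j) := by
    intro i j hij
    rw [letterAt_map, letterAt_map]
    cases hi : letterAt w i with
    | none =>
      cases hj : letterAt w j with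
      | none => rw [hi, hj] at hij; simp at hij
      | some b => simp [M.hash_lt, M'.hash_lt]
    | some a =>
      cases hj : letterAt w j with
      | none => simp [M.hash_gt, M'.hash_gt]
      | some b => exact hp a b
  constructor
  · rintro ⟨hne, hc⟩
    refine ⟨by simpa using hne, ?_⟩
    rw [List.length_map]
    exact chain_transfer (fun i => hnone i) hrel hc
  · rintro ⟨hne, hc⟩
    refine ⟨by intro hw; rw [hw] at hne; exact hne rfl, ?_⟩
    rw [List.length_map] at hc
    exact chain_transfer (fun i => (hnone i).symm)
      (fun i j hij => by
        refine (hrel i j ?_).symm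
        rcases hij with hi | hj
        · exact Or.inl (fun hn => hi ((hnone i).mp hn))
        · exact Or.inr (fun hn => hj ((hnone j).mp hn))) hc

end ChainTransfer
section Auto

variable {A B K : Type} [Semiring K]

instance moveFinite {A Q : Type} [Finite A] [Finite Q] : Finite (Move A Q) :=
  Finite.of_injective
    (fun m => match m with
      | .push q b r => (Sum.inl (q, b, r) : (Q × A × Q) ⊕ (Q × A × Q) ⊕ (Q × Q × Q))
      | .shift q b r => Sum.inr (Sum.inl (q, b, r))
      | .pop q p r => Sum.inr (Sum.inr (q, p, r)))
    (by intro m₁ m₂ hm; cases m₁ <;> cases m₂ <;> simp_all)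

lemma exec_measure {M : OPM A} {T : OPA A} {c c' : Config A T.Q} {m : Move A T.Q}
    (hx : Exec M T c m c') :
    2 * c'.input.length + c'.stack.length + 1 ≤ 2 * c.input.length + c.stack.length := by
  cases hx <;> dsimp only <;> simp only [List.length_cons] <;> omega

lemma execList_measure {M : OPM A} {T : OPA A} {c c' : Config A T.Q} {ms : List (Move A T.Q)}
    (hx : ExecList M T c ms c') :
    2 * c'.input.length + c'.stack.length + ms.length
      ≤ 2 * c.input.length + c.stack.length := by
  induction hx with
  | nil => simp
  | cons hstep _ ih => have := exec_measure hstep; simp only [List.length_cons]; omega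

lemma accRuns_finite [Finite A] (M : OPM A) (T : OPA A) [Finite T.Q] (w : List A) :
    (AccRuns M T w).Finite := by
  have hsub : AccRuns M T w ⊆
      (Set.univ : Set T.Q) ×ˢ ({ms : List (Move A T.Q) | ms.length ≤ 2 * w.length} ×ˢ
        (Set.univ : Set T.Q)) := by
    rintro ⟨qI, ms, qF⟩ ⟨_, _, hex⟩
    have := execList_measure hex
    simp at this
    exact ⟨trivial, by simp; omega, trivial⟩
  exact Set.Finite.subset
    (Set.finite_univ.prod ((List.finite_length_le _ _).prod Set.finite_univ)) hsub

lemma exec_det {M : OPM A} {T : OPA A} {c c₁ c₂ : Config A T.Q} {m : Move A T.Q}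
    (h₁ : Exec M T c m c₁) (h₂ : Exec M T c m c₂) : c₁ = c₂ := by
  cases h₁ <;> cases h₂ <;> rfl

lemma execList_det {M : OPM A} {T : OPA A} {c c₁ c₂ : Config A T.Q} {ms : List (Move A T.Q)}
    (h₁ : ExecList M T c ms c₁) (h₂ : ExecList M T c ms c₂) : c₁ = c₂ := by
  induction h₁ generalizing c₂ with
  | nil => cases h₂; rfl
  | cons hstep _ ih =>
    cases h₂ with
    | cons hstep' hrest' => exact ih (exec_det hstep hstep' ▸ hrest')

/-- The word consumed by a list of moves. -/
def wordOf {Q : Type} : List (Move A Q) → List A :=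
  fun ms => ms.filterMap (fun m => match m with
    | .push _ b _ => some b
    | .shift _ b _ => some b
    | .pop _ _ _ => none)

lemma execList_word {M : OPM A} {T : OPA A} {c c' : Config A T.Q} {ms : List (Move A T.Q)}
    (hx : ExecList M T c ms c') : c.input = wordOf ms ++ c'.input := by
  induction hx with
  | nil => simp [wordOf]
  | cons hstep _ ih => cases hstep <;> simp [wordOf, List.filterMap] at ih ⊢ <;> exact ih

variable (h : A → B)

/-- Lift a stack along `h`, annotating states with letters from the list `ys`. -/
def liftStack {Q : Type} : List (A × Q) → List A → List (B × (Q × A))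
  | [], _ => []
  | _ :: _, [] => []
  | (a, p) :: st, y :: ys => (h a, (p, y)) :: liftStack st ys

lemma liftStack_nil {Q : Type} (ys : List A) : liftStack h ([] : List (A × Q)) ys = [] := by
  cases ys <;> rfl

lemma liftStack_eq_nil {Q : Type} {st : List (A × Q)} {ys : List A}
    (hl : ys.length = st.length) (hn : liftStack h st ys = []) : st = [] := by
  cases st with
  | nil => rfl
  | cons hd tl =>
    cases ys with
    | nil => simp at hl
    | cons y ys => obtain ⟨a, p⟩ := hd; simp [liftStack] at hn

lemma topSym_lift {Q : Type} {st : List (A × Q)} {ys : List A}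
    (hl : ys.length = st.length) :
    topSym (liftStack h st ys) = (topSym st).map h := by
  cases st with
  | nil => rw [liftStack_nil]; rfl
  | cons hd tl =>
    cases ys with
    | nil => simp at hl
    | cons y ys => obtain ⟨a, p⟩ := hd; rfl

variable (a₀ : A)

/-- Translate a move sequence of the original automaton into one of the projected
automaton, threading the current letter annotation `x` and the stack annotations `ys`. -/
def trMoves {Q : Type} : A → List A → List (Move A Q) → List (Move B (Q × A))
  | _, _, [] => []
  | x, ys, .push q b r :: ms => .push (q, x) (h b) (r, b) :: trMoves b (x :: ys) ms
  | x, ys, .shift q b r :: ms => .shift (q, x) (h b) (r, b) :: trMoves b ys ms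
  | x, ys, .pop q p r :: ms => .pop (q, x) (p, ys.headD a₀) (r, x) :: trMoves x ys.tail ms

/-- The final letter annotation after executing a move sequence. -/
def annEnd {Q : Type} : A → List A → List (Move A Q) → A
  | x, _, [] => x
  | x, ys, m :: ms =>
    match m with
    | .push _ b _ => annEnd b (x :: ys) ms
    | .shift _ b _ => annEnd b ys ms
    | .pop _ _ _ => annEnd x ys.tail ms

end Auto
section Proj

variable {A B K : Type} [Semiring K]

/-- The projected automaton: states are pairs of a state of `W` and a letter annotation. -/
def projW [Fintype A] (h : A → B) (W : WOPA A K) (a₀ : A) : WOPA B K where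
  Q := W.Q × A
  fin := by haveI := W.fin; exact inferInstance
  I := {p | p.1 ∈ W.I ∧ p.2 = a₀}
  F := {p | p.1 ∈ W.F}
  δpush := {t | h t.2.2.2 = t.2.1 ∧ (t.1.1, t.2.2.2, t.2.2.1) ∈ W.δpush}
  δshift := {t | h t.2.2.2 = t.2.1 ∧ (t.1.1, t.2.2.2, t.2.2.1) ∈ W.δshift}
  δpop := {t | t.2.2.2 = t.1.2 ∧ (t.1.1, t.2.1.1, t.2.2.1) ∈ W.δpop}
  wtpush t := W.wtpush (t.1.1, t.2.2.2, t.2.2.1)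
  wtshift t := W.wtshift (t.1.1, t.2.2.2, t.2.2.1)
  wtpop t := W.wtpop (t.1.1, t.2.1.1, t.2.2.1)

variable [Fintype A] {M : OPM A} {M' : OPM B} {h : A → B} (hp : OPMPreserving M M' h)
  (W : WOPA A K) (a₀ : A)

include hp in
lemma rel_lift_left (o : Option A) (b : A) :
    M'.rel (o.map h) (some (h b)) = M.rel o (some b) := by
  cases o with
  | none => simp [M'.hash_lt, M.hash_lt]
  | some a => exact (hp a b).symm

include hp in
lemma rel_lift_right (a : A) (o : Option A) :
    M'.rel (some (h a)) (o.map h) = M.rel (some a) o := by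
  cases o with
  | none => simp [M'.hash_gt, M.hash_gt]
  | some b => exact (hp a b).symm

lemma wt_tr : ∀ (ms : List (Move A W.Q)) (x : A) (ys : List A),
    (trMoves h a₀ x ys ms).map (moveWt (projW h W a₀)) = ms.map (moveWt W) := by
  intro ms
  induction ms with
  | nil => intro x ys; rfl
  | cons m ms ih =>
    intro x ys
    cases m with
    | push q b r => simp only [trMoves]; exact congrArg₂ List.cons rfl (ih _ _)
    | shift q b r => simp only [trMoves]; exact congrArg₂ List.cons rfl (ih _ _)
    | pop q p r => simp only [trMoves]; exact congrArg₂ List.cons rfl (ih _ _)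

lemma tr_inj : ∀ (ms₁ ms₂ : List (Move A W.Q)) (x : A) (ys : List A),
    trMoves h a₀ x ys ms₁ = trMoves h a₀ x ys ms₂ → ms₁ = ms₂ := by
  intro ms₁
  induction ms₁ with
  | nil =>
    intro ms₂ x ys hms
    cases ms₂ with
    | nil => rfl
    | cons m ms => cases m <;> simp [trMoves] at hms
  | cons m₁ ms₁ ih =>
    intro ms₂ x ys hms
    cases ms₂ with
    | nil => cases m₁ <;> simp [trMoves] at hms
    | cons m₂ ms₂ =>
      cases m₁ with
      | push q1 b1 r1 =>
        cases m₂ with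
        | push q2 b2 r2 =>
          simp only [trMoves] at hms
          obtain ⟨hhd, htl⟩ := List.cons.inj hms
          injection hhd with h1 h2 h3
          injection h1 with hq _
          injection h3 with hr hb
          subst hq; subst hb; subst hr
          rw [ih ms₂ _ _ htl]
        | shift q2 b2 r2 =>
          simp only [trMoves] at hms
          obtain ⟨hhd, -⟩ := List.cons.inj hms
          simp at hhd
        | pop q2 p2 r2 =>
          simp only [trMoves] at hms
          obtain ⟨hhd, -⟩ := List.cons.inj hms
          simp at hhd
      | shift q1 b1 r1 =>
        cases m₂ with
        | push q2 b2 r2 =>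
          simp only [trMoves] at hms
          obtain ⟨hhd, -⟩ := List.cons.inj hms
          simp at hhd
        | shift q2 b2 r2 =>
          simp only [trMoves] at hms
          obtain ⟨hhd, htl⟩ := List.cons.inj hms
          injection hhd with h1 h2 h3
          injection h1 with hq _
          injection h3 with hr hb
          subst hq; subst hb; subst hr
          rw [ih ms₂ _ _ htl]
        | pop q2 p2 r2 =>
          simp only [trMoves] at hms
          obtain ⟨hhd, -⟩ := List.cons.inj hms
          simp at hhd
      | pop q1 p1 r1 =>
        cases m₂ with
        | push q2 b2 r2 =>
          simp only [trMoves] at hms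
          obtain ⟨hhd, -⟩ := List.cons.inj hms
          simp at hhd
        | shift q2 b2 r2 =>
          simp only [trMoves] at hms
          obtain ⟨hhd, -⟩ := List.cons.inj hms
          simp at hhd
        | pop q2 p2 r2 =>
          simp only [trMoves] at hms
          obtain ⟨hhd, htl⟩ := List.cons.inj hms
          injection hhd with h1 h2 h3
          injection h1 with hq _
          injection h2 with hp' _
          injection h3 with hr _
          subst hq; subst hp'; subst hr
          rw [ih ms₂ _ _ htl]

end Proj
section FwdBwd

variable {A B K : Type} [Semiring K] [Fintype A] {M : OPM A} {M' : OPM B} {h : A → B}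
  (hp : OPMPreserving M M' h) (W : WOPA A K) (a₀ : A)

lemma liftStack_cons {Q : Type} (a : A) (p : Q) (st : List (A × Q)) (y : A) (ys : List A) :
    liftStack h ((a, p) :: st) (y :: ys) = (h a, (p, y)) :: liftStack h st ys := rfl

include hp in
lemma fwd : ∀ {c c' : Config A W.Q} {ms : List (Move A W.Q)}, ExecList M W.toOPA c ms c' →
    ∀ x ys, ys.length = c.stack.length →
    ∃ ys₂, ys₂.length = c'.stack.length ∧
      ExecList M' (projW h W a₀).toOPA
        ⟨liftStack h c.stack ys, (c.state, x), c.input.map h⟩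
        (trMoves h a₀ x ys ms)
        ⟨liftStack h c'.stack ys₂, (c'.state, annEnd x ys ms), c'.input.map h⟩ := by
  intro c c' ms hex
  induction hex with
  | nil c => intro x ys hl; exact ⟨ys, hl, ExecList.nil _⟩
  | cons hstep hrest ih =>
    intro x ys hl
    cases hstep with
    | @push st q r b xinp hlt hmem =>
      obtain ⟨ys₂, hl₂, hex'⟩ := ih b (x :: ys) (by simpa using hl)
      refine ⟨ys₂, hl₂, ExecList.cons ?_ hex'⟩
      have hrel : M'.rel (topSym (liftStack h st ys)) (some (h b)) = some .lt := by
        rw [topSym_lift h hl, rel_lift_left hp]; exact hlt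
      exact Exec.push hrel ⟨rfl, hmem⟩
    | @shift st p q r a b xinp heq hmem =>
      cases ys with
      | nil => simp at hl
      | cons y ys =>
        obtain ⟨ys₂, hl₂, hex'⟩ := ih b (y :: ys) (by simpa using hl)
        refine ⟨ys₂, hl₂, ExecList.cons ?_ hex'⟩
        have hrel : M'.rel (some (h a)) (some (h b)) = some .eq := by
          rw [← hp a b]; exact heq
        exact Exec.shift hrel ⟨rfl, hmem⟩
    | @pop st p q r a xinp hgt hmem =>
      cases ys with
      | nil => simp at hl
      | cons y ys =>
        obtain ⟨ys₂, hl₂, hex'⟩ := ih x ys (by simpa using hl)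
        refine ⟨ys₂, hl₂, ?_⟩
        have hrel : M'.rel (some (h a)) ((xinp.map h).head?) = some .gt := by
          rw [List.head?_map, rel_lift_right hp]; exact hgt
        exact ExecList.cons (Exec.pop hrel ⟨rfl, hmem⟩)
          (by simpa [trMoves, annEnd] using hex')

include hp in
lemma bwd : ∀ {c cf : Config B (projW h W a₀).Q} {ms' : List (Move B (projW h W a₀).Q)},
    ExecList M' (projW h W a₀).toOPA c ms' cf → cf.stack = [] → cf.input = [] →
    ∀ st ys q x v, ys.length = st.length →
      c = ⟨liftStack h st ys, (q, x), v⟩ →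
    ∃ w ms, w.map h = v ∧ ms' = trMoves h a₀ x ys ms ∧
      ExecList M W.toOPA ⟨st, q, w⟩ ms ⟨[], cf.state.1, []⟩ := by
  intro c cf ms' hex
  induction hex with
  | nil c =>
    intro hst hin st ys q x v hl hc
    subst hc
    have hst' : st = [] := liftStack_eq_nil h hl hst
    subst hst'
    have hin' : v = [] := hin
    subst hin'
    exact ⟨[], [], rfl, rfl, ExecList.nil _⟩
  | cons hstep hrest ih =>
    intro hst hin st ys q x v hl hc
    cases hstep with
    | @push stk qx r' b xinp hlt hmem =>
      obtain ⟨hstk, hqx, hv⟩ := Config.mk.injEq .. ▸ hc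
      obtain ⟨hb, hmem'⟩ := hmem
      subst hqx
      dsimp only at hb hmem'
      obtain ⟨w', ms, hw, htr, hex'⟩ := ih hst hin ((r'.2, q) :: st) (x :: ys) r'.1 r'.2 xinp
        (by simpa using hl)
        (by simp [liftStack_cons, hstk, ← hb]; rfl)
      refine ⟨r'.2 :: w', .push q r'.2 r'.1 :: ms, by simp [hw, hb, ← hv], ?_, ?_⟩
      · simp [trMoves, htr, ← hb]; rfl
      · refine ExecList.cons (Exec.push ?_ hmem') hex'
        rw [← rel_lift_left hp (topSym st) r'.2, ← topSym_lift h hl, ← hstk, hb]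
        exact hlt
    | @shift stk' pq qx r' a' b xinp heq hmem =>
      obtain ⟨hstk, hqx, hv⟩ := Config.mk.injEq .. ▸ hc
      obtain ⟨hb, hmem'⟩ := hmem
      subst hqx
      dsimp only at hb hmem'
      cases st with
      | nil => rw [liftStack_nil] at hstk; simp at hstk
      | cons hd st' =>
        cases ys with
        | nil => simp at hl
        | cons y ys' =>
          obtain ⟨a1, p1⟩ := hd
          rw [liftStack_cons] at hstk
          obtain ⟨hhd, hrest'⟩ := List.cons.inj hstk
          obtain ⟨ha', hpq⟩ := Prod.mk.inj hhd
          obtain ⟨w', ms, hw, htr, hex'⟩ := ih hst hin ((r'.2, p1) :: st') (y :: ys')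
            r'.1 r'.2 xinp (by simpa using hl)
            (by simp [liftStack_cons, hrest', hpq, ← hb]; rfl)
          refine ⟨r'.2 :: w', .shift q r'.2 r'.1 :: ms, by simp [hw, hb, ← hv], ?_, ?_⟩
          · simp [trMoves, htr, ← hb]; rfl
          · refine ExecList.cons (Exec.shift ?_ hmem') hex'
            rw [ha', ← hb, ← hp a1 r'.2] at heq
            exact heq
    | @pop stk' pq qx r' a' xinp hgt hmem =>
      obtain ⟨hstk, hqx, hv⟩ := Config.mk.injEq .. ▸ hc
      obtain ⟨r1, z⟩ := r'
      obtain ⟨hz, hmem'⟩ := hmem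
      subst hqx
      dsimp only at hz hmem'
      subst hz
      cases st with
      | nil => rw [liftStack_nil] at hstk; simp at hstk
      | cons hd st' =>
        cases ys with
        | nil => simp at hl
        | cons y ys' =>
          obtain ⟨a1, p1⟩ := hd
          rw [liftStack_cons] at hstk
          obtain ⟨hhd, hrest'⟩ := List.cons.inj hstk
          obtain ⟨ha', hpq⟩ := Prod.mk.inj hhd
          subst hpq
          obtain ⟨w, ms, hw, htr, hex'⟩ := ih hst hin st' ys' r1 z xinp
            (by simpa using hl) (by simp [hrest'])
          refine ⟨w, .pop q p1 r1 :: ms, by simp [hw, ← hv], ?_, ?_⟩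
          · simp [trMoves, ← htr]; rfl
          · refine ExecList.cons (Exec.pop ?_ hmem') hex'
            rw [← rel_lift_right hp a1 w.head?, ← List.head?_map, hw, ← ha']
            exact hgt

end FwdBwd
section Behavior

variable {A B K : Type} [Semiring K] [Fintype A] {M : OPM A} {M' : OPM B} {h : A → B}
  (hp : OPMPreserving M M' h) (W : WOPA A K) (a₀ : A)

variable (h) in
/-- The map from accepting runs of `W` to accepting runs of the projected automaton. -/
def gRun : W.Q × List (Move A W.Q) × W.Q →
    (W.Q × A) × List (Move B (W.Q × A)) × (W.Q × A) := fun ρ =>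
  ((ρ.1, a₀), trMoves h a₀ a₀ [] ρ.2.1, (ρ.2.2, annEnd a₀ [] ρ.2.1))

lemma gRun_inj : Function.Injective (gRun h W a₀) := by
  intro ρ₁ ρ₂ hg
  simp only [gRun, Prod.mk.injEq] at hg
  obtain ⟨⟨hq, -⟩, hms, hf, -⟩ := hg
  have hms' := tr_inj W a₀ _ _ _ _ hms
  exact Prod.ext hq (Prod.ext hms' hf)

include hp in
lemma accRuns_proj (v : List B) :
    AccRuns M' (projW h W a₀).toOPA v
      = ⋃ w ∈ {w : List A | w.map h = v}, gRun h W a₀ '' AccRuns M W.toOPA w := by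
  ext ρ'
  constructor
  · rintro ⟨hI, hF, hex⟩
    obtain ⟨⟨qi, xa⟩, ms', qF'⟩ := ρ'
    obtain ⟨hqi, hxa⟩ := hI
    dsimp only at hqi hxa hF hex ⊢
    rw [hxa] at hex ⊢
    obtain ⟨w, ms, hw, htr, hexW⟩ := bwd hp W a₀ hex rfl rfl [] [] qi a₀ v rfl
      (by rw [liftStack_nil]; rfl)
    refine Set.mem_biUnion (show w ∈ {w : List A | w.map h = v} from hw)
      ⟨(qi, ms, qF'.1), ⟨hqi, hF, hexW⟩, ?_⟩
    obtain ⟨ys₂, -, hex'⟩ := fwd hp W a₀ hexW a₀ [] rfl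
    rw [liftStack_nil, liftStack_nil, hw] at hex'
    rw [← htr] at hex'
    have := execList_det hex' hex
    obtain ⟨-, hstate, -⟩ := Config.mk.injEq .. ▸ this
    simp only [gRun, ← htr]
    rw [hstate]; rfl
  · intro hρ'
    replace hρ' := Set.mem_iUnion₂.mp hρ'
    obtain ⟨w, hw, ρ, ⟨hI, hF, hex⟩, rfl⟩ := hρ'
    refine ⟨⟨hI, rfl⟩, hF, ?_⟩
    obtain ⟨ys₂, -, hex'⟩ := fwd hp W a₀ hex a₀ [] rfl
    rw [liftStack_nil, liftStack_nil, hw] at hex'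
    exact hex'

include hp in
lemma behavior_proj [Fintype B] (v : List B) (hv : v ∈ OPWords M') :
    behavior M' (projW h W a₀) v
      = ∑ᶠ w ∈ {w | w ∈ OPWords M ∧ w.map h = v}, behavior M W w := by
  haveI := W.fin
  have hSv : {w : List A | w ∈ OPWords M ∧ w.map h = v} = {w | w.map h = v} := by
    ext w
    simp only [Set.mem_setOf_eq]
    exact ⟨fun hw => hw.2, fun hw => ⟨(opwords_map_iff hp w).2 (hw ▸ hv), hw⟩⟩
  have hfinSv : {w : List A | w.map h = v}.Finite := by
    refine Set.Finite.subset (List.finite_length_eq A v.length) ?_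
    intro w hw
    simpa using congrArg List.length hw
  have hfin : ∀ w ∈ {w : List A | w.map h = v},
      (gRun h W a₀ '' AccRuns M W.toOPA w).Finite :=
    fun w _ => (accRuns_finite M W.toOPA w).image _
  have hdisj : {w : List A | w.map h = v}.PairwiseDisjoint
      (fun w => gRun h W a₀ '' AccRuns M W.toOPA w) := by
    intro w₁ _ w₂ _ hne
    refine Set.disjoint_left.mpr ?_
    rintro ρ' ⟨ρ₁, hρ₁, rfl⟩ ⟨ρ₂, hρ₂, hg⟩
    apply hne
    have hms : trMoves h a₀ a₀ [] ρ₂.2.1 = trMoves h a₀ a₀ [] ρ₁.2.1 :=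
      congrArg (fun t => t.2.1) hg
    have hms' := tr_inj W a₀ _ _ _ _ hms
    have e₁ := execList_word hρ₁.2.2
    have e₂ := execList_word hρ₂.2.2
    dsimp only at e₁ e₂
    rw [List.append_nil] at e₁ e₂
    rw [e₁, e₂, hms']
  rw [hSv]
  unfold behavior
  rw [accRuns_proj hp W a₀ v]
  refine (finsum_mem_biUnion hdisj hfinSv hfin).trans ?_
  refine finsum_mem_congr rfl ?_
  intro w _
  rw [finsum_mem_image ((gRun_inj W a₀).injOn)]
  refine finsum_mem_congr rfl ?_
  intro ρ _
  show ((trMoves h a₀ a₀ [] ρ.2.1).map (moveWt (projW h W a₀))).prod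
    = (ρ.2.1.map (moveWt W)).prod
  rw [wt_tr]

end Behavior

section Zero

/-- The automaton with no accepting runs. -/
def zeroW (B K : Type) [Semiring K] : WOPA B K where
  Q := PUnit
  fin := inferInstance
  I := ∅
  F := ∅
  δpush := ∅
  δshift := ∅
  δpop := ∅
  wtpush _ := 1
  wtshift _ := 1
  wtpop _ := 1

lemma behavior_zeroW {B K : Type} [Semiring K] (M' : OPM B) (v : List B) :
    behavior M' (zeroW B K) v = 0 := by
  have : AccRuns M' (zeroW B K).toOPA v = ∅ := by
    ext ρ
    simp only [AccRuns, Set.mem_setOf_eq, Set.mem_empty_iff_false, iff_false]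
    rintro ⟨hI, -, -⟩
    exact hI
  rw [behavior, this, finsum_mem_empty]

end Zero
/-- Regular (resp. strictly regular) series are closed under OPM-preserving projections. -/
theorem proj_regular {A B K : Type} [Fintype A] [Fintype B] [Semiring K]
    (M : OPM A) (M' : OPM B) (h : A → B) (hp : OPMPreserving M M' h)
    (S : List A → K) :
    (Regular M S → Regular M' (mapSeries M h S)) ∧
    (StrictlyRegular M S → StrictlyRegular M' (mapSeries M h S)) := by
  by_cases hA : Nonempty A
  · obtain ⟨a₀⟩ := hA
    have key : ∀ W : WOPA A K, (∀ w ∈ OPWords M, S w = behavior M W w) →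
        ∀ v ∈ OPWords M', mapSeries M h S v = behavior M' (projW h W a₀) v := by
      intro W hW v hv
      rw [mapSeries, behavior_proj hp W a₀ v hv]
      exact finsum_mem_congr rfl fun w hw => hW w hw.1
    constructor
    · rintro ⟨W, hW⟩
      exact ⟨projW h W a₀, key W hW⟩
    · rintro ⟨W, hres, hW⟩
      refine ⟨projW h W a₀, fun t ht => hres _ ht.2, key W hW⟩
  · haveI : IsEmpty A := not_nonempty_iff.mp hA
    have hmap : ∀ v, mapSeries M h S v = 0 := by
      intro v
      have : {w : List A | w ∈ OPWords M ∧ w.map h = v} = ∅ := by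
        ext w
        simp only [Set.mem_setOf_eq, Set.mem_empty_iff_false, iff_false]
        rintro ⟨⟨hne, -⟩, -⟩
        cases w with
        | nil => exact hne rfl
        | cons a _ => exact IsEmpty.elim ‹IsEmpty A› a
      rw [mapSeries, this, finsum_mem_empty]
    have hbeh : ∀ v ∈ OPWords M', mapSeries M h S v = behavior M' (zeroW B K) v := by
      intro v _
      rw [hmap, behavior_zeroW]
    constructor
    · rintro -
      exact ⟨zeroW B K, hbeh⟩
    · rintro -
      exact ⟨zeroW B K, fun t _ => rfl, hbeh⟩
end WOP
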